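/- Define the expectation functional E_ν[f] = (1/(ν+1))·[f(D)](ν+1) where D = ((ν²−1)/2)·(d/dν) and f is a polynomial, meaning for f(x) = x^k the value is (1/(ν+1))·D^k(ν+1). Then for each positive integer k, E_ν[x^k] = (k!/2^k)·ν^k + h_k(ν), where h_k is a polynomial in ν of degree at most k−1. -/

import Mathlib

open Polynomial

noncomputable def Q14 : ℕ → Polynomial ℝ
  | 0 => 1
  | n + 1 => C (1/2 : ℝ) * ((X - 1) * Q14 n + (X ^ 2 - 1) * (Q14 n).derivative)

lemma iterD14 (n : ℕ) :
    (fun f : ℝ → ℝ => fun x => (x ^ 2 - 1) / 2 * deriv f x)^[n] (fun x => x + 1)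
      = fun x => ((X + 1) * Q14 n).eval x := by
  induction n with
  | zero => funext x; simp [Q14]
  | succ n ih =>
      rw [Function.iterate_succ_apply', ih]
      funext x
      show (x ^ 2 - 1) / 2 * deriv (fun y => ((X + 1) * Q14 n).eval y) x
          = ((X + 1) * Q14 (n + 1)).eval x
      rw [Polynomial.deriv]
      simp [Q14, derivative_mul]
      ring

lemma Qdeg14 (n : ℕ) : (Q14 n).natDegree ≤ n := by
  induction n with
  | zero => simp [Q14]
  | succ n ih =>
      have hd : (Q14 n).derivative.natDegree + 2 ≤ n + 1 ∨ (Q14 n).derivative = 0 := by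
        rcases Nat.eq_zero_or_pos n with h0 | hpos
        · right
          subst h0
          have : (Q14 0).natDegree = 0 := by simp [Q14]
          have := Polynomial.natDegree_eq_zero.mp (le_antisymm ih (Nat.zero_le _))
          obtain ⟨c, hc⟩ := this
          rw [← hc]; simp
        · left
          have := Polynomial.natDegree_derivative_le (Q14 n)
          omega
      have h1 : ((X - 1 : Polynomial ℝ) * Q14 n).natDegree ≤ n + 1 := by
        refine le_trans (Polynomial.natDegree_mul_le) ?_
        have : (X - 1 : Polynomial ℝ).natDegree ≤ 1 := by
          simpa using Polynomial.natDegree_X_sub_C_le (1 : ℝ)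
        omega
      have h2 : ((X ^ 2 - 1 : Polynomial ℝ) * (Q14 n).derivative).natDegree ≤ n + 1 := by
        rcases hd with hd | hd
        · refine le_trans (Polynomial.natDegree_mul_le) ?_
          have : (X ^ 2 - 1 : Polynomial ℝ).natDegree ≤ 2 := by
            compute_degree
          omega
        · rw [hd]; simp
      calc (Q14 (n + 1)).natDegree
          ≤ (C (1/2 : ℝ)).natDegree + ((X - 1) * Q14 n + (X ^ 2 - 1) * (Q14 n).derivative).natDegree := by
            rw [Q14]; exact Polynomial.natDegree_mul_le
        _ ≤ n + 1 := by
            simp only [Polynomial.natDegree_C, Nat.zero_add]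
            exact le_trans (Polynomial.natDegree_add_le _ _) (max_le h1 h2)

lemma Qcoeff14 (n : ℕ) : (Q14 n).coeff n = n.factorial / 2 ^ n := by
  induction n with
  | zero => simp [Q14]
  | succ n ih =>
      have hQhigh : ∀ m, n < m → (Q14 n).coeff m = 0 := fun m hm =>
        Polynomial.coeff_eq_zero_of_natDegree_lt (lt_of_le_of_lt (Qdeg14 n) hm)
      have hderiv : ∀ m, (Q14 n).derivative.coeff m = (m + 1 : ℝ) * (Q14 n).coeff (m + 1) := by
        intro m; rw [Polynomial.coeff_derivative]; ring
      rw [Q14, Polynomial.coeff_C_mul]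
      rw [Polynomial.coeff_add]
      have e1 : ((X - 1 : Polynomial ℝ) * Q14 n).coeff (n + 1)
          = (Q14 n).coeff n := by
        rw [sub_mul, Polynomial.coeff_sub, Polynomial.coeff_X_mul, one_mul,
          hQhigh (n + 1) (by omega), sub_zero]
      have e2 : ((X ^ 2 - 1 : Polynomial ℝ) * (Q14 n).derivative).coeff (n + 1)
          = (n : ℝ) * (Q14 n).coeff n := by
        rw [sub_mul, Polynomial.coeff_sub, one_mul]
        rcases Nat.eq_zero_or_pos n with h0 | hpos
        · subst h0
          simp [Q14]
        · have hn1 : n + 1 = (n - 1) + 2 := by omega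
          rw [hn1, pow_two, mul_assoc, Polynomial.coeff_X_mul, Polynomial.coeff_X_mul]
          rw [hderiv, hderiv]
          have : n - 1 + 1 = n := by omega
          rw [this, hQhigh (n - 1 + 2 + 1) (by omega)]
          have hc : ((n - 1 : ℕ) : ℝ) = (n : ℝ) - 1 := by
            rw [Nat.cast_sub hpos]; norm_num
          rw [hc]
          ring
      rw [e1, e2, ih]
      rw [Nat.factorial_succ]
      push_cast
      field_simp
      ring

/-- with `D = ((ν²−1)/2)·d/dν` and
`E_ν[x^k] = (1/(ν+1))·D^k(ν+1)`, for each `k ≥ 1` one has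
`E_ν[x^k] = (k!/2^k)·ν^k + h_k(ν)` with `h_k` a polynomial of degree ≤ k−1. -/
theorem stmt14 (k : ℕ) (hk : 1 ≤ k) :
    ∃ h : Polynomial ℝ, h.natDegree ≤ k - 1 ∧
      ∀ ν : ℝ, 1 < ν →
        (1 / (ν + 1)) *
            ((fun f : ℝ → ℝ => fun x => (x ^ 2 - 1) / 2 * deriv f x)^[k]
              (fun x => x + 1)) ν
          = (Nat.factorial k : ℝ) / 2 ^ k * ν ^ k + h.eval ν := by
  refine ⟨Q14 k - C ((Nat.factorial k : ℝ) / 2 ^ k) * X ^ k, ?_, ?_⟩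
  · rw [Polynomial.natDegree_le_iff_coeff_eq_zero]
    intro m hm
    have hm' : k ≤ m := by omega
    rw [Polynomial.coeff_sub, Polynomial.coeff_C_mul, Polynomial.coeff_X_pow]
    rcases eq_or_lt_of_le hm' with h | h
    · subst h
      rw [Qcoeff14, if_pos rfl]
      ring
    · rw [Polynomial.coeff_eq_zero_of_natDegree_lt (lt_of_le_of_lt (Qdeg14 k) h),
        if_neg (by omega)]
      ring
  · intro ν hν
    rw [iterD14]
    have hν1 : ν + 1 ≠ 0 := by linarith
    simp only [Polynomial.eval_mul, Polynomial.eval_add, Polynomial.eval_X,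
      Polynomial.eval_one, Polynomial.eval_sub, Polynomial.eval_pow,
      Polynomial.eval_C]
    field_simp
    ring
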